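/- Let G be a group acting by homeomorphisms on compact Hausdorff spaces X and Y, and let p : Y → X be a continuous G-equivariant surjection. Assume Y is totally disconnected and that Y is irreducible over X, meaning every closed G-invariant subset A ⊆ Y with p(A) = X equals Y. Assume additionally that the action of G on X is minimal or that G is countable. Then for every nonempty open subset U ⊆ Y, the image p(U) has nonempty interior in X. -/

import Mathlib

open Pointwise


/-- The action of `G` on `X` is minimal if every orbit is dense. -/
def IsMinimalAction (G X : Type*) [Group G] [TopologicalSpace X] [MulAction G X] : Prop :=
  ∀ x : X, Dense (MulAction.orbit G x)

/-- A nonempty open set covered by finitely many closed sets forces one of the closed sets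
to have nonempty interior. -/
lemma aux_finset_closed_cover {X : Type*} [TopologicalSpace X] {ι : Type*}
    (t : Finset ι) (C : ι → Set X) (hC : ∀ i, IsClosed (C i)) :
    ∀ W : Set X, IsOpen W → W.Nonempty → W ⊆ ⋃ i ∈ t, C i →
      ∃ i ∈ t, (interior (C i)).Nonempty := by
  classical
  induction t using Finset.induction_on with
  | empty => intro W _ hne hsub; obtain ⟨x, hx⟩ := hne; simpa using hsub hx
  | @insert a s ha ih =>
    intro W hW hne hsub
    by_cases h : (W \ C a).Nonempty
    · obtain ⟨i, hi, hint⟩ := ih (W \ C a) (hW.sdiff (hC a)) h (by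
        intro x hx
        have := hsub hx.1
        simp only [Finset.mem_insert, Set.mem_iUnion] at this ⊢
        rcases this with ⟨i, hi | hi, hxi⟩
        · exact absurd hxi (by rw [hi] at *; exact hx.2)
        · exact ⟨i, hi, hxi⟩)
      exact ⟨i, Finset.mem_insert_of_mem hi, hint⟩
    · refine ⟨a, Finset.mem_insert_self a s, ?_⟩
      have hWC : W ⊆ C a := fun x hx => by
        by_contra hxc; exact h ⟨x, hx, hxc⟩
      obtain ⟨x, hx⟩ := hne
      exact ⟨x, interior_maximal hWC hW hx⟩

/-- Let `p : Y → X` be a continuous `G`-equivariant surjection of compact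
Hausdorff `G`-spaces, with `Y` totally disconnected and irreducible over `X` (every closed
`G`-invariant subset of `Y` mapping onto `X` is all of `Y`).  If the action on `X` is minimal
or `G` is countable, then the image of every nonempty open subset of `Y` has nonempty interior
in `X`. -/
theorem nonempty_interior_image_of_irreducible
    {G X Y : Type*} [Group G]
    [TopologicalSpace X] [CompactSpace X] [T2Space X] [MulAction G X] [ContinuousConstSMul G X]
    [TopologicalSpace Y] [CompactSpace Y] [T2Space Y] [TotallyDisconnectedSpace Y]
    [MulAction G Y] [ContinuousConstSMul G Y]
    (p : Y → X) (hpc : Continuous p) (hps : Function.Surjective p)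
    (hpe : ∀ (g : G) (y : Y), p (g • y) = g • p y)
    (hirr : ∀ A : Set Y, IsClosed A → (∀ (g : G), ∀ y ∈ A, g • y ∈ A) →
      p '' A = Set.univ → A = Set.univ)
    (hmc : IsMinimalAction G X ∨ Countable G)
    (U : Set Y) (hU : IsOpen U) (hUne : U.Nonempty) :
    (interior (p '' U)).Nonempty := by
  classical
  obtain ⟨y₀, hy₀⟩ := hUne
  -- find a nonempty clopen V ⊆ U
  obtain ⟨V, hVclopen, hy₀V, hVU⟩ := compact_exists_isClopen_in_isOpen hU hy₀
  -- B = union of translates of V, A = complement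
  set B : Set Y := ⋃ g : G, g • V with hB
  have hBopen : IsOpen B := isOpen_iUnion fun g => hVclopen.2.smul g
  set A : Set Y := Bᶜ with hA
  have hAclosed : IsClosed A := hBopen.isClosed_compl
  have hAinv : ∀ (g : G), ∀ y ∈ A, g • y ∈ A := by
    intro g y hy hmem
    apply hy
    simp only [hB, Set.mem_iUnion] at hmem ⊢
    obtain ⟨h, hmem⟩ := hmem
    refine ⟨g⁻¹ * h, ?_⟩
    rw [mul_smul]
    have := Set.smul_mem_smul_set (a := g⁻¹) hmem
    rwa [inv_smul_smul] at this
  have hAne : A ≠ Set.univ := by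
    intro h
    have : y₀ ∈ A := h ▸ Set.mem_univ y₀
    exact this (Set.mem_iUnion.2 ⟨1, by simpa using hy₀V⟩)
  have hpAne : p '' A ≠ Set.univ := fun h => hAne (hirr A hAclosed hAinv h)
  -- W := complement of p '' A is open nonempty, and p ⁻¹ W ⊆ B
  have hpAclosed : IsClosed (p '' A) :=
    (hAclosed.isCompact.image hpc).isClosed
  obtain ⟨x₀, hx₀⟩ : ((p '' A)ᶜ).Nonempty := by
    rw [Set.nonempty_compl]; exact hpAne
  set W : Set X := (p '' A)ᶜ with hW
  have hWopen : IsOpen W := hpAclosed.isOpen_compl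
  have hpreW : p ⁻¹' W ⊆ B := by
    intro y hy
    by_contra hyB
    exact hy ⟨y, hyB, rfl⟩
  -- locally compact: K compact with x₀ ∈ interior K ⊆ K ⊆ W
  obtain ⟨K, hKcomp, hx₀K, hKW⟩ := exists_compact_subset hWopen hx₀
  have hpreKcomp : IsCompact (p ⁻¹' K) :=
    (hKcomp.isClosed.preimage hpc).isCompact
  have hcover : p ⁻¹' K ⊆ ⋃ g : G, g • V := fun y hy =>
    hpreW (hKW hy)
  obtain ⟨t, ht⟩ := hpreKcomp.elim_finite_subcover (fun g : G => g • V)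
    (fun g => hVclopen.2.smul g) hcover
  -- interior K is covered by the closed sets p '' (g • V)
  have hCclosed : ∀ g : G, IsClosed (p '' (g • V)) := fun g =>
    (((hVclopen.1.isCompact).smul g).image hpc).isClosed
  have hcov2 : interior K ⊆ ⋃ g ∈ t, p '' (g • V) := by
    intro x hx
    obtain ⟨y, rfl⟩ := hps x
    have hy : y ∈ p ⁻¹' K := show p y ∈ K from interior_subset hx
    have := ht hy
    simp only [Set.mem_iUnion] at this ⊢
    obtain ⟨g, hg, hmem⟩ := this
    exact ⟨g, hg, y, hmem, rfl⟩
  obtain ⟨g, _, hgint⟩ := aux_finset_closed_cover t (fun g => p '' (g • V)) hCclosed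
    (interior K) isOpen_interior ⟨x₀, hx₀K⟩ hcov2
  -- p '' (g • V) = g • (p '' V)
  have himg : p '' (g • V) = g • (p '' V) := by
    ext x
    simp only [Set.mem_smul_set, Set.mem_image]
    constructor
    · rintro ⟨y, ⟨z, hz, rfl⟩, rfl⟩
      exact ⟨p z, ⟨z, hz, rfl⟩, (hpe g z).symm⟩
    · rintro ⟨_, ⟨z, hz, rfl⟩, rfl⟩
      exact ⟨g • z, ⟨z, hz, rfl⟩, hpe g z⟩
  rw [himg, interior_smul] at hgint
  obtain ⟨x, hx⟩ := hgint
  obtain ⟨x', hx', rfl⟩ := hx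
  exact ⟨x', interior_mono (Set.image_mono hVU) hx'⟩
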